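/- arXiv:1807.08737 — 7 statements merged into one kernel-verified Lean document; each statement's English description precedes it below -/
import Mathlib

section
/- Let U ⊆ ℂ be open and let f : ℂ → ℂ be holomorphic on U (complex differentiable at every point of U, with complex derivative f′). Define α : ℂ → ℝ by α(z) = (1 − |f(z)|²)/(1 + |f(z)|²). Then for every z ∈ U, Δα(z) = −(8|f′(z)|²/(1+|f(z)|²)²)·α(z), where Δ denotes the Euclidean Laplacian on ℂ ≅ ℝ², i.e. the sum of the second directional derivatives in the directions 1 and i. -/
open Complex

/-- First derivative formula: directional derivative of `α` at a point where `f` has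
derivative `f' w`. -/
lemma alpha_fderiv_formula (f f' : ℂ → ℂ) (α : ℂ → ℝ)
    (hα : ∀ z : ℂ, α z = (1 - ‖f z‖ ^ 2) / (1 + ‖f z‖ ^ 2))
    {w : ℂ} (hfw : HasDerivAt f (f' w) w) (v : ℂ) :
    fderiv ℝ α w v =
      -4 * ((f w).re * (f' w * v).re + (f w).im * (f' w * v).im) *
        ((1 + Complex.normSq (f w)) * (1 + Complex.normSq (f w)))⁻¹ := by
  have hDf : HasFDerivAt f (((1 : ℂ →L[ℂ] ℂ).smulRight (f' w)).restrictScalars ℝ) w :=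
    hfw.hasFDerivAt.restrictScalars ℝ
  set D : ℂ →L[ℝ] ℂ := ((1 : ℂ →L[ℂ] ℂ).smulRight (f' w)).restrictScalars ℝ with hD
  have hre : HasFDerivAt (fun x => (f x).re) (Complex.reCLM.comp D) w :=
    Complex.reCLM.hasFDerivAt.comp w hDf
  have him : HasFDerivAt (fun x => (f x).im) (Complex.imCLM.comp D) w :=
    Complex.imCLM.hasFDerivAt.comp w hDf
  have hu : HasFDerivAt (fun x => Complex.normSq (f x))
      (((f w).re • (Complex.reCLM.comp D) + (f w).re • (Complex.reCLM.comp D)) +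
        ((f w).im • (Complex.imCLM.comp D) + (f w).im • (Complex.imCLM.comp D))) w := by
    have h := (hre.mul hre).add (him.mul him)
    simp only [Complex.normSq_apply]
    exact h
  set Du := ((f w).re • (Complex.reCLM.comp D) + (f w).re • (Complex.reCLM.comp D)) +
        ((f w).im • (Complex.imCLM.comp D) + (f w).im • (Complex.imCLM.comp D)) with hDu
  have hpos : (0:ℝ) < 1 + Complex.normSq (f w) :=
    add_pos_of_pos_of_nonneg one_pos (Complex.normSq_nonneg _)
  have hne : (1 + Complex.normSq (f w)) ≠ 0 := ne_of_gt hpos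
  have hs : HasFDerivAt (fun x => 1 + Complex.normSq (f x)) Du w := hu.const_add 1
  have hinv : HasFDerivAt (fun x => (1 + Complex.normSq (f x))⁻¹)
      ((-(ContinuousLinearMap.mulLeftRight ℝ ℝ (1 + Complex.normSq (f w))⁻¹
          (1 + Complex.normSq (f w))⁻¹)).comp Du) w :=
    (hasFDerivAt_inv' hne).comp w hs
  have hnum : HasFDerivAt (fun x => 1 - Complex.normSq (f x)) (-Du) w := hu.const_sub 1
  have hαeq : α = fun x => (1 - Complex.normSq (f x)) * (1 + Complex.normSq (f x))⁻¹ := by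
    funext x
    rw [hα x, Complex.sq_norm, div_eq_mul_inv]
  have hαd : HasFDerivAt α
      ((1 - Complex.normSq (f w)) •
          ((-(ContinuousLinearMap.mulLeftRight ℝ ℝ (1 + Complex.normSq (f w))⁻¹
            (1 + Complex.normSq (f w))⁻¹)).comp Du)
        + (1 + Complex.normSq (f w))⁻¹ • (-Du)) w := by
    rw [hαeq]
    exact hnum.mul hinv
  rw [hαd.fderiv]
  simp only [hDu, hD, ContinuousLinearMap.add_apply, ContinuousLinearMap.smul_apply,
    ContinuousLinearMap.comp_apply, ContinuousLinearMap.neg_apply,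
    ContinuousLinearMap.mulLeftRight_apply, ContinuousLinearMap.coe_restrictScalars',
    ContinuousLinearMap.smulRight_apply, ContinuousLinearMap.one_apply,
    Complex.reCLM_apply, Complex.imCLM_apply, smul_eq_mul, Complex.mul_re, Complex.mul_im]
  field_simp
  ring

/-- If `f` is holomorphic on an open set `U ⊆ ℂ` with derivative `f′`, then
`α = (1 − |f|²)/(1 + |f|²)` satisfies `Δα = −(8|f′|²/(1+|f|²)²)·α` on `U`,
where `Δ` is the sum of second directional derivatives in the directions `1` and `i`. -/
theorem laplacian_alpha_eigen
    (U : Set ℂ) (hU : IsOpen U) (f f' : ℂ → ℂ)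
    (hf : ∀ z ∈ U, HasDerivAt f (f' z) z)
    (α : ℂ → ℝ)
    (hα : ∀ z : ℂ, α z = (1 - ‖f z‖ ^ 2) / (1 + ‖f z‖ ^ 2)) :
    ∀ z ∈ U,
      fderiv ℝ (fun w => fderiv ℝ α w 1) z 1
        + fderiv ℝ (fun w => fderiv ℝ α w Complex.I) z Complex.I
      = -(8 * ‖f' z‖ ^ 2 / (1 + ‖f z‖ ^ 2) ^ 2) * α z := by
  intro z hz
  -- second derivative of f
  have hdf : DifferentiableOn ℂ f U := fun w hw =>
    (hf w hw).differentiableAt.differentiableWithinAt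
  have han : AnalyticOnNhd ℂ f U := hdf.analyticOnNhd hU
  have hder : AnalyticOnNhd ℂ (deriv f) U := han.deriv
  have hb : HasDerivAt f' (deriv (deriv f) z) z := by
    have h1 : HasDerivAt (deriv f) (deriv (deriv f) z) z :=
      (hder z hz).differentiableAt.hasDerivAt
    apply h1.congr_of_eventuallyEq
    filter_upwards [hU.mem_nhds hz] with x hx
    exact ((hf x hx).deriv).symm
  set c := deriv (deriv f) z with hc
  -- the second directional derivative in direction v
  have key : ∀ v : ℂ,
      fderiv ℝ (fun w => fderiv ℝ α w v) z v =
        fderiv ℝ (fun w =>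
          -4 * ((f w).re * (f' w * v).re + (f w).im * (f' w * v).im) *
            ((1 + Complex.normSq (f w)) * (1 + Complex.normSq (f w)))⁻¹) z v := by
    intro v
    have hev : (fun w => fderiv ℝ α w v) =ᶠ[nhds z] (fun w =>
          -4 * ((f w).re * (f' w * v).re + (f w).im * (f' w * v).im) *
            ((1 + Complex.normSq (f w)) * (1 + Complex.normSq (f w)))⁻¹) := by
      filter_upwards [hU.mem_nhds hz] with x hx
      exact alpha_fderiv_formula f f' α hα (hf x hx) v
    rw [hev.fderiv_eq]
  -- explicit second derivative via HasFDerivAt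
  have hval : ∀ v : ℂ,
      fderiv ℝ (fun w =>
          -4 * ((f w).re * (f' w * v).re + (f w).im * (f' w * v).im) *
            ((1 + Complex.normSq (f w)) * (1 + Complex.normSq (f w)))⁻¹) z v =
      (-4 * (((f' z * v).re * (f' z * v).re + (c * v * v).re * (f z).re)
            + ((f' z * v).im * (f' z * v).im + (c * v * v).im * (f z).im)))
          * ((1 + Complex.normSq (f z)) * (1 + Complex.normSq (f z)))⁻¹
      + (-4 * ((f z).re * (f' z * v).re + (f z).im * (f' z * v).im)) *
          (-( ((1 + Complex.normSq (f z)) * (1 + Complex.normSq (f z)))⁻¹ *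
            (2 * (1 + Complex.normSq (f z)) *
              (2 * ((f z).re * (f' z * v).re + (f z).im * (f' z * v).im))) *
            ((1 + Complex.normSq (f z)) * (1 + Complex.normSq (f z)))⁻¹)) := by
    intro v
    have hDf : HasFDerivAt f (((1 : ℂ →L[ℂ] ℂ).smulRight (f' z)).restrictScalars ℝ) z :=
      (hf z hz).hasFDerivAt.restrictScalars ℝ
    set D : ℂ →L[ℝ] ℂ := ((1 : ℂ →L[ℂ] ℂ).smulRight (f' z)).restrictScalars ℝ with hD
    have hre : HasFDerivAt (fun x => (f x).re) (Complex.reCLM.comp D) z :=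
      Complex.reCLM.hasFDerivAt.comp z hDf
    have him : HasFDerivAt (fun x => (f x).im) (Complex.imCLM.comp D) z :=
      Complex.imCLM.hasFDerivAt.comp z hDf
    have hDbv : HasFDerivAt (fun w => f' w * v)
        (((1 : ℂ →L[ℂ] ℂ).smulRight (c * v)).restrictScalars ℝ) z :=
      (hb.mul_const v).hasFDerivAt.restrictScalars ℝ
    set Db : ℂ →L[ℝ] ℂ := ((1 : ℂ →L[ℂ] ℂ).smulRight (c * v)).restrictScalars ℝ with hDb
    have hbre : HasFDerivAt (fun x => (f' x * v).re) (Complex.reCLM.comp Db) z :=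
      Complex.reCLM.hasFDerivAt.comp z hDbv
    have hbim : HasFDerivAt (fun x => (f' x * v).im) (Complex.imCLM.comp Db) z :=
      Complex.imCLM.hasFDerivAt.comp z hDbv
    have hN : HasFDerivAt
        (fun w => -4 * ((f w).re * (f' w * v).re + (f w).im * (f' w * v).im))
        ((-4 : ℝ) • (((f z).re • (Complex.reCLM.comp Db) + (f' z * v).re • (Complex.reCLM.comp D))
          + ((f z).im • (Complex.imCLM.comp Db) + (f' z * v).im • (Complex.imCLM.comp D)))) z :=
      ((hre.mul hbre).add (him.mul hbim)).const_mul (-4)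
    have hu : HasFDerivAt (fun x => Complex.normSq (f x))
        (((f z).re • (Complex.reCLM.comp D) + (f z).re • (Complex.reCLM.comp D)) +
          ((f z).im • (Complex.imCLM.comp D) + (f z).im • (Complex.imCLM.comp D))) z := by
      have h := (hre.mul hre).add (him.mul him)
      simp only [Complex.normSq_apply]
      exact h
    set Du := ((f z).re • (Complex.reCLM.comp D) + (f z).re • (Complex.reCLM.comp D)) +
          ((f z).im • (Complex.imCLM.comp D) + (f z).im • (Complex.imCLM.comp D)) with hDu
    have hs : HasFDerivAt (fun x => 1 + Complex.normSq (f x)) Du z := hu.const_add 1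
    have hpos : (0:ℝ) < 1 + Complex.normSq (f z) :=
      add_pos_of_pos_of_nonneg one_pos (Complex.normSq_nonneg _)
    have hne2 : (1 + Complex.normSq (f z)) * (1 + Complex.normSq (f z)) ≠ 0 :=
      ne_of_gt (mul_pos hpos hpos)
    have hss : HasFDerivAt (fun x => (1 + Complex.normSq (f x)) * (1 + Complex.normSq (f x)))
        ((1 + Complex.normSq (f z)) • Du + (1 + Complex.normSq (f z)) • Du) z := hs.mul hs
    have hM : HasFDerivAt (fun x => ((1 + Complex.normSq (f x)) * (1 + Complex.normSq (f x)))⁻¹)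
        ((-(ContinuousLinearMap.mulLeftRight ℝ ℝ
            ((1 + Complex.normSq (f z)) * (1 + Complex.normSq (f z)))⁻¹
            ((1 + Complex.normSq (f z)) * (1 + Complex.normSq (f z)))⁻¹)).comp
          ((1 + Complex.normSq (f z)) • Du + (1 + Complex.normSq (f z)) • Du)) z :=
      (hasFDerivAt_inv' hne2).comp z hss
    have hG := hN.mul hM
    simp only [Pi.mul_def] at hG
    rw [hG.fderiv]
    simp only [hDu, hDb, hD, ContinuousLinearMap.add_apply, ContinuousLinearMap.smul_apply,
      ContinuousLinearMap.comp_apply, ContinuousLinearMap.neg_apply,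
      ContinuousLinearMap.mulLeftRight_apply, ContinuousLinearMap.coe_restrictScalars',
      ContinuousLinearMap.smulRight_apply, ContinuousLinearMap.one_apply,
      Complex.reCLM_apply, Complex.imCLM_apply, smul_eq_mul]
    ring
  have hz1 := (key 1).trans (hval 1)
  have hzI := (key Complex.I).trans (hval Complex.I)
  rw [hz1, hzI, hα z]
  simp only [Complex.sq_norm]
  have hne' : 1 + ((f z).re * (f z).re + (f z).im * (f z).im) ≠ 0 := by
    have := mul_self_nonneg (f z).re
    have := mul_self_nonneg (f z).im
    nlinarith
  simp only [Complex.mul_re, Complex.mul_im, Complex.I_re, Complex.I_im, Complex.one_re,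
    Complex.one_im, Complex.normSq_apply]
  field_simp [hne']
  ring
end

section
/- Let U ⊆ ℂ be open and let f : ℂ → ℂ be holomorphic on U (complex differentiable at every point of U, with complex derivative f′). Define β : ℂ → ℝ by β(z) = 2·Re f(z)/(1 + |f(z)|²). Then for every z ∈ U, Δβ(z) = −(8|f′(z)|²/(1+|f(z)|²)²)·β(z), where Δ denotes the Euclidean Laplacian on ℂ ≅ ℝ², i.e. the sum of the second directional derivatives in the directions 1 and i. -/
/-- If `f` is holomorphic on an open set `U ⊆ ℂ` with derivative `f′`, then
`β = 2·Re f/(1 + |f|²)` satisfies `Δβ = −(8|f′|²/(1+|f|²)²)·β` on `U`,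
where `Δ` is the sum of second directional derivatives in the directions `1` and `i`. -/
theorem laplacian_beta_eigen
    (U : Set ℂ) (hU : IsOpen U) (f f' : ℂ → ℂ)
    (hf : ∀ z ∈ U, HasDerivAt f (f' z) z)
    (β : ℂ → ℝ)
    (hβ : ∀ z : ℂ, β z = 2 * (f z).re / (1 + ‖f z‖ ^ 2)) :
    ∀ z ∈ U,
      fderiv ℝ (fun w => fderiv ℝ β w 1) z 1
        + fderiv ℝ (fun w => fderiv ℝ β w Complex.I) z Complex.I
      = -(8 * ‖f' z‖ ^ 2 / (1 + ‖f z‖ ^ 2) ^ 2) * β z := by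
  intro z hz
  have hNpos : ∀ w : ℂ, (0:ℝ) < 1 + ((f w).re * (f w).re + (f w).im * (f w).im) := by
    intro w
    nlinarith [mul_self_nonneg (f w).re, mul_self_nonneg (f w).im]
  have hβfun : β = fun w => 2 * (f w).re /
      (1 + ((f w).re * (f w).re + (f w).im * (f w).im)) := by
    funext w
    rw [hβ, Complex.sq_norm, Complex.normSq_apply]
  -- first derivative formula, valid on all of `U`
  have key1 : ∀ (e : ℂ), ∀ w ∈ U, fderiv ℝ β w e =
      (2 * (e * f' w).re * (1 + ((f w).re * (f w).re + (f w).im * (f w).im))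
        - 2 * (f w).re * (2 * (f w).re * (e * f' w).re + 2 * (f w).im * (e * f' w).im))
       / ((1 + ((f w).re * (f w).re + (f w).im * (f w).im))
          * (1 + ((f w).re * (f w).re + (f w).im * (f w).im))) := by
    intro e w hw
    have hfR : HasFDerivAt f
        ((ContinuousLinearMap.smulRight (1:ℂ→L[ℂ]ℂ) (f' w)).restrictScalars ℝ) w :=
      ((hf w hw).hasFDerivAt).restrictScalars ℝ
    have hu := Complex.reCLM.hasFDerivAt.comp w hfR
    have hv := Complex.imCLM.hasFDerivAt.comp w hfR
    have hN := ((hu.mul hu).add (hv.mul hv)).const_add (1:ℝ)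
    have hInvN := (hasDerivAt_inv (hNpos w).ne').comp_hasFDerivAt w hN
    have hβd0 := (hu.const_mul (2:ℝ)).mul hInvN
    have hβd : HasFDerivAt β _ w :=
      hβd0.congr_of_eventuallyEq (Filter.Eventually.of_forall fun x => by
        simp [hβfun, div_eq_mul_inv, Function.comp])
    rw [hβd.fderiv]
    simp only [ContinuousLinearMap.smul_apply, ContinuousLinearMap.sub_apply,
      ContinuousLinearMap.add_apply, ContinuousLinearMap.comp_apply,
      ContinuousLinearMap.coe_comp', Function.comp_apply,
      ContinuousLinearMap.coe_restrictScalars',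
      ContinuousLinearMap.smulRight_apply, ContinuousLinearMap.one_apply,
      smul_eq_mul, Complex.reCLM_apply, Complex.imCLM_apply,
      Complex.smul_re, Complex.smul_im, Pi.mul_apply, Pi.add_apply, Pi.sub_apply]
    have hne := (hNpos w).ne'
    field_simp
    ring
  -- differentiability of `f'` at `z`
  have hmem : U ∈ nhds z := hU.mem_nhds hz
  have hfd : DifferentiableOn ℂ f U := fun w hw =>
    ((hf w hw).differentiableAt).differentiableWithinAt
  have han : AnalyticAt ℂ f z := hfd.analyticAt hmem
  have hder : DifferentiableAt ℂ (deriv f) z := by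
    have h1 : DifferentiableAt ℂ (fderiv ℂ f) z := han.fderiv.differentiableAt
    have h2 : DifferentiableAt ℂ (fun w => fderiv ℂ f w 1) z :=
      (ContinuousLinearMap.apply ℂ ℂ (1:ℂ)).differentiableAt.comp z h1
    have h3 : deriv f = fun w => fderiv ℂ f w 1 := rfl
    rw [h3]
    exact h2
  have heq : f' =ᶠ[nhds z] deriv f := by
    filter_upwards [hmem] with w hw
    exact ((hf w hw).deriv).symm
  have hf'd : HasDerivAt f' (deriv (deriv f) z) z :=
    (hder.hasDerivAt).congr_of_eventuallyEq heq
  set a : ℂ := f' z with ha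
  set b : ℂ := deriv (deriv f) z with hb
  set u : ℝ := (f z).re with hu0
  set v : ℝ := (f z).im with hv0
  set N : ℝ := 1 + (u * u + v * v) with hN0
  have hNz : (0:ℝ) < N := hNpos z
  -- the second derivative, computed for each direction `e`
  have key2 : ∀ (e : ℂ), fderiv ℝ (fun w => fderiv ℝ β w e) z e =
      ((2 * (e * (e * b)).re * N
          - 2 * u * (2 * (e * a).re * (e * a).re + 2 * u * (e * (e * b)).re
              + 2 * (e * a).im * (e * a).im + 2 * v * (e * (e * b)).im)) * (N * N)
        - (2 * (e * a).re * N - 2 * u * (2 * u * (e * a).re + 2 * v * (e * a).im))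
            * (2 * N * (2 * u * (e * a).re + 2 * v * (e * a).im)))
        / ((N * N) * (N * N)) := by
    intro e
    have hEq : (fun w => fderiv ℝ β w e) =ᶠ[nhds z]
        (fun w =>
          (2 * (e * f' w).re * (1 + ((f w).re * (f w).re + (f w).im * (f w).im))
            - 2 * (f w).re * (2 * (f w).re * (e * f' w).re + 2 * (f w).im * (e * f' w).im))
          / ((1 + ((f w).re * (f w).re + (f w).im * (f w).im))
             * (1 + ((f w).re * (f w).re + (f w).im * (f w).im)))) := by
      filter_upwards [hmem] with w hw
      exact key1 e w hw
    rw [hEq.fderiv_eq]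
    -- differentiate the explicit formula
    have hfR : HasFDerivAt f
        ((ContinuousLinearMap.smulRight (1:ℂ→L[ℂ]ℂ) a).restrictScalars ℝ) z :=
      ((hf z hz).hasFDerivAt).restrictScalars ℝ
    have hf'R : HasFDerivAt f'
        ((ContinuousLinearMap.smulRight (1:ℂ→L[ℂ]ℂ) b).restrictScalars ℝ) z :=
      (hf'd.hasFDerivAt).restrictScalars ℝ
    have hu1 := Complex.reCLM.hasFDerivAt.comp z hfR
    have hv1 := Complex.imCLM.hasFDerivAt.comp z hfR
    have hmul := hf'R.const_mul e
    have hA := Complex.reCLM.hasFDerivAt.comp z hmul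
    have hB := Complex.imCLM.hasFDerivAt.comp z hmul
    have hN1 := ((hu1.mul hu1).add (hv1.mul hv1)).const_add (1:ℝ)
    have hP := ((hA.const_mul (2:ℝ)).mul hN1).sub
      ((hu1.const_mul (2:ℝ)).mul
        (((hu1.const_mul (2:ℝ)).mul hA).add ((hv1.const_mul (2:ℝ)).mul hB)))
    have hQ := hN1.mul hN1
    have hQne : (1 + ((f z).re * (f z).re + (f z).im * (f z).im))
        * (1 + ((f z).re * (f z).re + (f z).im * (f z).im)) ≠ 0 :=
      (mul_pos (hNpos z) (hNpos z)).ne'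
    have hInvQ := (hasDerivAt_inv hQne).comp_hasFDerivAt z hQ
    have hG0 := hP.mul hInvQ
    have hG : HasFDerivAt (fun w =>
          (2 * (e * f' w).re * (1 + ((f w).re * (f w).re + (f w).im * (f w).im))
            - 2 * (f w).re * (2 * (f w).re * (e * f' w).re + 2 * (f w).im * (e * f' w).im))
          / ((1 + ((f w).re * (f w).re + (f w).im * (f w).im))
             * (1 + ((f w).re * (f w).re + (f w).im * (f w).im)))) _ z :=
      hG0.congr_of_eventuallyEq (Filter.Eventually.of_forall fun x => by
        simp [div_eq_mul_inv, Function.comp])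
    rw [hG.fderiv]
    simp only [ContinuousLinearMap.smul_apply, ContinuousLinearMap.sub_apply,
      ContinuousLinearMap.add_apply, ContinuousLinearMap.comp_apply,
      ContinuousLinearMap.coe_comp', Function.comp_apply,
      ContinuousLinearMap.coe_restrictScalars',
      ContinuousLinearMap.smulRight_apply, ContinuousLinearMap.one_apply,
      smul_eq_mul, Complex.reCLM_apply, Complex.imCLM_apply,
      Complex.smul_re, Complex.smul_im, Pi.mul_apply, Pi.add_apply, Pi.sub_apply]
    rw [← hu0, ← hv0, ← hN0]
    have hNne : N ≠ 0 := hNz.ne'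
    field_simp
    ring
  rw [key2 1, key2 Complex.I, hβ z, Complex.sq_norm (f z), Complex.sq_norm a,
    Complex.normSq_apply, Complex.normSq_apply, ← hu0, ← hv0]
  have hNne : N ≠ 0 := hNz.ne'
  have hNrw : 1 + (u * u + v * v) = N := rfl
  simp only [one_mul, Complex.mul_re, Complex.mul_im, Complex.I_re, Complex.I_im,
    Complex.one_re, Complex.one_im]
  rw [hNrw]
  have hpow : (1:ℝ) + (u ^ 2 + v ^ 2) = N := by rw [hN0]; ring
  field_simp
  ring
end

section
/- Let U ⊆ ℂ be open and let f : ℂ → ℂ be holomorphic on U (complex differentiable at every point of U, with complex derivative f′). Define γ : ℂ → ℝ by γ(z) = 2·Im f(z)/(1 + |f(z)|²). Then for every z ∈ U, Δγ(z) = −(8|f′(z)|²/(1+|f(z)|²)²)·γ(z), where Δ denotes the Euclidean Laplacian on ℂ ≅ ℝ², i.e. the sum of the second directional derivatives in the directions 1 and i. -/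
open Complex

theorem aux_inv_fderiv (N : ℂ → ℝ) (DN : ℂ →L[ℝ] ℝ) (w : ℂ)
    (hN : HasFDerivAt N DN w) (hNe : N w ≠ 0) :
    HasFDerivAt (fun x => (N x)⁻¹) ((-((N w) ^ 2)⁻¹) • DN) w :=
  HasDerivAt.comp_hasFDerivAt (𝕜 := ℝ) w (hasDerivAt_inv hNe) hN

theorem aux_first_deriv (U : Set ℂ) (f f' : ℂ → ℂ)
    (hf : ∀ z ∈ U, HasDerivAt f (f' z) z)
    (γ : ℂ → ℝ)
    (hγ : ∀ z : ℂ, γ z = 2 * (f z).im / (1 + ‖f z‖ ^ 2)) :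
    ∀ w ∈ U, ∀ e : ℂ, fderiv ℝ γ w e =
      2 * ((f' w).im * e.re + (f' w).re * e.im)
          * (1 + ((f w).re * (f w).re + (f w).im * (f w).im))⁻¹
        - 2 * (f w).im * (2 * (f w).re * ((f' w).re * e.re - (f' w).im * e.im)
            + 2 * (f w).im * ((f' w).im * e.re + (f' w).re * e.im))
          * ((1 + ((f w).re * (f w).re + (f w).im * (f w).im)) ^ 2)⁻¹ := by
  intro w hw e
  have hγfun : γ = fun x => 2 * (f x).im *
      (1 + ((f x).re * (f x).re + (f x).im * (f x).im))⁻¹ := by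
    funext x
    rw [hγ x, Complex.sq_norm, Complex.normSq_apply, div_eq_mul_inv]
  set Df : ℂ →L[ℝ] ℂ :=
    ContinuousLinearMap.restrictScalars ℝ ((1 : ℂ →L[ℂ] ℂ).smulRight (f' w)) with hDfdef
  have hDf : HasFDerivAt f Df w := (hf w hw).hasFDerivAt.restrictScalars ℝ
  have hu : HasFDerivAt (fun x => (f x).re) (Complex.reCLM.comp Df) w :=
    Complex.reCLM.hasFDerivAt.comp w hDf
  have hv : HasFDerivAt (fun x => (f x).im) (Complex.imCLM.comp Df) w :=
    Complex.imCLM.hasFDerivAt.comp w hDf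
  set DN : ℂ →L[ℝ] ℝ :=
    ((f w).re • Complex.reCLM.comp Df + (f w).re • Complex.reCLM.comp Df) +
      ((f w).im • Complex.imCLM.comp Df + (f w).im • Complex.imCLM.comp Df) with hDNdef
  have hN : HasFDerivAt (fun x => 1 + ((f x).re * (f x).re + (f x).im * (f x).im)) DN w :=
    ((hu.mul hu).add (hv.mul hv)).const_add 1
  have hNe : (1:ℝ) + ((f w).re * (f w).re + (f w).im * (f w).im) ≠ 0 := by
    nlinarith [sq_nonneg (f w).re, sq_nonneg (f w).im]
  have hinv := aux_inv_fderiv _ _ _ hN hNe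
  have hg := (hv.const_mul (2:ℝ)).mul hinv
  simp only [Pi.mul_def] at hg
  rw [hγfun, hg.fderiv]
  simp [hDNdef, hDfdef, ContinuousLinearMap.smulRight_apply, Complex.mul_re, Complex.mul_im]
  ring

set_option maxHeartbeats 2000000 in
theorem aux_second_deriv (f f' : ℂ → ℂ) (c2 : ℂ) (z e : ℂ)
    (hfz : HasDerivAt f (f' z) z) (hf'z : HasDerivAt f' c2 z) :
    fderiv ℝ (fun w =>
      2 * ((f' w).im * e.re + (f' w).re * e.im)
          * (1 + ((f w).re * (f w).re + (f w).im * (f w).im))⁻¹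
        - 2 * (f w).im * (2 * (f w).re * ((f' w).re * e.re - (f' w).im * e.im)
            + 2 * (f w).im * ((f' w).im * e.re + (f' w).re * e.im))
          * ((1 + ((f w).re * (f w).re + (f w).im * (f w).im))
             * (1 + ((f w).re * (f w).re + (f w).im * (f w).im)))⁻¹) z e
    = (2 * ((c2.im * e.re + c2.re * e.im) * e.re + (c2.re * e.re - c2.im * e.im) * e.im))
        / (1 + ((f z).re * (f z).re + (f z).im * (f z).im))
      - (4 * ((f' z).im * e.re + (f' z).re * e.im)
            * (2 * (f z).re * ((f' z).re * e.re - (f' z).im * e.im)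
               + 2 * (f z).im * ((f' z).im * e.re + (f' z).re * e.im))
          + 4 * (f z).im * ((f' z).re * e.re - (f' z).im * e.im)
              * ((f' z).re * e.re - (f' z).im * e.im)
          + 4 * (f z).im * ((f' z).im * e.re + (f' z).re * e.im)
              * ((f' z).im * e.re + (f' z).re * e.im)
          + 4 * (f z).re * (f z).im
              * ((c2.re * e.re - c2.im * e.im) * e.re - (c2.im * e.re + c2.re * e.im) * e.im)
          + 4 * (f z).im * (f z).im
              * ((c2.im * e.re + c2.re * e.im) * e.re + (c2.re * e.re - c2.im * e.im) * e.im))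
        / (1 + ((f z).re * (f z).re + (f z).im * (f z).im)) ^ 2
      + (4 * (f z).im
          * (2 * (f z).re * ((f' z).re * e.re - (f' z).im * e.im)
             + 2 * (f z).im * ((f' z).im * e.re + (f' z).re * e.im))
          * (2 * (f z).re * ((f' z).re * e.re - (f' z).im * e.im)
             + 2 * (f z).im * ((f' z).im * e.re + (f' z).re * e.im))
          * (1 + ((f z).re * (f z).re + (f z).im * (f z).im)))
        / (1 + ((f z).re * (f z).re + (f z).im * (f z).im)) ^ 4 := by
  set Df : ℂ →L[ℝ] ℂ :=
    ContinuousLinearMap.restrictScalars ℝ ((1 : ℂ →L[ℂ] ℂ).smulRight (f' z)) with hDfdef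
  have hDf : HasFDerivAt f Df z := hfz.hasFDerivAt.restrictScalars ℝ
  set Df2 : ℂ →L[ℝ] ℂ :=
    ContinuousLinearMap.restrictScalars ℝ ((1 : ℂ →L[ℂ] ℂ).smulRight c2) with hDf2def
  have hDf2 : HasFDerivAt f' Df2 z := hf'z.hasFDerivAt.restrictScalars ℝ
  have hu : HasFDerivAt (fun x => (f x).re) (Complex.reCLM.comp Df) z :=
    Complex.reCLM.hasFDerivAt.comp z hDf
  have hv : HasFDerivAt (fun x => (f x).im) (Complex.imCLM.comp Df) z :=
    Complex.imCLM.hasFDerivAt.comp z hDf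
  have hp : HasFDerivAt (fun x => (f' x).re) (Complex.reCLM.comp Df2) z :=
    Complex.reCLM.hasFDerivAt.comp z hDf2
  have hq : HasFDerivAt (fun x => (f' x).im) (Complex.imCLM.comp Df2) z :=
    Complex.imCLM.hasFDerivAt.comp z hDf2
  set DN : ℂ →L[ℝ] ℝ :=
    ((f z).re • Complex.reCLM.comp Df + (f z).re • Complex.reCLM.comp Df) +
      ((f z).im • Complex.imCLM.comp Df + (f z).im • Complex.imCLM.comp Df) with hDNdef
  have hN : HasFDerivAt (fun x => 1 + ((f x).re * (f x).re + (f x).im * (f x).im)) DN z :=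
    ((hu.mul hu).add (hv.mul hv)).const_add 1
  have hNe : (1:ℝ) + ((f z).re * (f z).re + (f z).im * (f z).im) ≠ 0 := by
    nlinarith [sq_nonneg (f z).re, sq_nonneg (f z).im]
  have hNe2 : ((1:ℝ) + ((f z).re * (f z).re + (f z).im * (f z).im))
      * (1 + ((f z).re * (f z).re + (f z).im * (f z).im)) ≠ 0 := mul_ne_zero hNe hNe
  have hinv := aux_inv_fderiv _ _ _ hN hNe
  have hinv2 := aux_inv_fderiv _ _ _ (hN.mul hN) hNe2
  have hQ := ((hq.mul_const e.re).add (hp.mul_const e.im)).const_mul (2:ℝ)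
  have hterm1 := hQ.mul hinv
  have hinnerP := (hp.mul_const e.re).sub (hq.mul_const e.im)
  have hinnerQ := (hq.mul_const e.re).add (hp.mul_const e.im)
  have hB := (((hu.const_mul (2:ℝ)).mul hinnerP).add ((hv.const_mul (2:ℝ)).mul hinnerQ))
  have hterm2 := ((hv.const_mul (2:ℝ)).mul hB).mul hinv2
  have hE := hterm1.sub hterm2
  simp only [Pi.mul_def, Pi.add_def, Pi.sub_def] at hE
  rw [hE.fderiv]
  simp [hDNdef, hDfdef, hDf2def, ContinuousLinearMap.smulRight_apply,
    Complex.mul_re, Complex.mul_im]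
  generalize (1 : ℝ) + ((f z).re * (f z).re + (f z).im * (f z).im) = t
  ring


set_option maxHeartbeats 2000000

/-- If `f` is holomorphic on an open set `U ⊆ ℂ` with derivative `f′`, then
`γ = 2·Im f/(1 + |f|²)` satisfies `Δγ = −(8|f′|²/(1+|f|²)²)·γ` on `U`,
where `Δ` is the sum of second directional derivatives in the directions `1` and `i`. -/
theorem laplacian_gamma_eigen
    (U : Set ℂ) (hU : IsOpen U) (f f' : ℂ → ℂ)
    (hf : ∀ z ∈ U, HasDerivAt f (f' z) z)
    (γ : ℂ → ℝ)
    (hγ : ∀ z : ℂ, γ z = 2 * (f z).im / (1 + ‖f z‖ ^ 2)) :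
    ∀ z ∈ U,
      fderiv ℝ (fun w => fderiv ℝ γ w 1) z 1
        + fderiv ℝ (fun w => fderiv ℝ γ w Complex.I) z Complex.I
      = -(8 * ‖f' z‖ ^ 2 / (1 + ‖f z‖ ^ 2) ^ 2) * γ z := by
  intro z hz
  have hmem : U ∈ nhds z := hU.mem_nhds hz
  have hfd : DifferentiableOn ℂ f U := fun w hw =>
    ((hf w hw).differentiableAt).differentiableWithinAt
  have hdiff : DifferentiableAt ℂ (deriv f) z :=
    (((hfd.analyticOnNhd hU).deriv) z hz).differentiableAt
  have heqf' : f' =ᶠ[nhds z] deriv f := by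
    filter_upwards [hmem] with w hw using ((hf w hw).deriv).symm
  have hf'z : HasDerivAt f' (deriv (deriv f) z) z :=
    hdiff.hasDerivAt.congr_of_eventuallyEq heqf'
  set c2 := deriv (deriv f) z with hc2
  have heq : ∀ e : ℂ, fderiv ℝ (fun w => fderiv ℝ γ w e) z =
      fderiv ℝ (fun w =>
        2 * ((f' w).im * e.re + (f' w).re * e.im)
            * (1 + ((f w).re * (f w).re + (f w).im * (f w).im))⁻¹
          - 2 * (f w).im * (2 * (f w).re * ((f' w).re * e.re - (f' w).im * e.im)
              + 2 * (f w).im * ((f' w).im * e.re + (f' w).re * e.im))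
            * ((1 + ((f w).re * (f w).re + (f w).im * (f w).im))
               * (1 + ((f w).re * (f w).re + (f w).im * (f w).im)))⁻¹) z := by
    intro e
    apply Filter.EventuallyEq.fderiv_eq
    filter_upwards [hmem] with w hw
    rw [aux_first_deriv U f f' hf γ hγ w hw e, pow_two]
  have key : ∀ e : ℂ, fderiv ℝ (fun w => fderiv ℝ γ w e) z e =
      (2 * ((c2.im * e.re + c2.re * e.im) * e.re + (c2.re * e.re - c2.im * e.im) * e.im))
        / (1 + ((f z).re * (f z).re + (f z).im * (f z).im))
      - (4 * ((f' z).im * e.re + (f' z).re * e.im)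
            * (2 * (f z).re * ((f' z).re * e.re - (f' z).im * e.im)
               + 2 * (f z).im * ((f' z).im * e.re + (f' z).re * e.im))
          + 4 * (f z).im * ((f' z).re * e.re - (f' z).im * e.im)
              * ((f' z).re * e.re - (f' z).im * e.im)
          + 4 * (f z).im * ((f' z).im * e.re + (f' z).re * e.im)
              * ((f' z).im * e.re + (f' z).re * e.im)
          + 4 * (f z).re * (f z).im
              * ((c2.re * e.re - c2.im * e.im) * e.re - (c2.im * e.re + c2.re * e.im) * e.im)
          + 4 * (f z).im * (f z).im
              * ((c2.im * e.re + c2.re * e.im) * e.re + (c2.re * e.re - c2.im * e.im) * e.im))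
        / (1 + ((f z).re * (f z).re + (f z).im * (f z).im)) ^ 2
      + (4 * (f z).im
          * (2 * (f z).re * ((f' z).re * e.re - (f' z).im * e.im)
             + 2 * (f z).im * ((f' z).im * e.re + (f' z).re * e.im))
          * (2 * (f z).re * ((f' z).re * e.re - (f' z).im * e.im)
             + 2 * (f z).im * ((f' z).im * e.re + (f' z).re * e.im))
          * (1 + ((f z).re * (f z).re + (f z).im * (f z).im)))
        / (1 + ((f z).re * (f z).re + (f z).im * (f z).im)) ^ 4 := by
    intro e
    rw [heq e]
    exact aux_second_deriv f f' c2 z e (hf z hz) hf'z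
  have hNe : (1:ℝ) + ((f z).re * (f z).re + (f z).im * (f z).im) ≠ 0 := by
    nlinarith [sq_nonneg (f z).re, sq_nonneg (f z).im]
  rw [key 1, key Complex.I, hγ z]
  simp only [Complex.sq_norm, Complex.normSq_apply, Complex.one_re, Complex.one_im,
    Complex.I_re, Complex.I_im]
  set t : ℝ := 1 + ((f z).re * (f z).re + (f z).im * (f z).im) with htdef
  field_simp
  ring
end

section
/- Let α′ > 0 and κ < 0 be fixed real numbers. Define x : ℝ → ℝ by x(u) = (u + √(u² − 2α′κ))/2 and g : ℝ → ℝ by g(u) = (1/2)·(x(u)² − α′κ·log x(u)). Then x(u) > 0 for all u, g is differentiable with g′(u) = x(u) for every u ∈ ℝ, and g is strictly convex on ℝ (equivalently, x is strictly increasing on ℝ). -/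
/-- For `α′ > 0` and `κ < 0`, with `x(u) = (u + √(u² − 2α′κ))/2` and
`g(u) = (1/2)(x(u)² − α′κ·log x(u))`, one has `x(u) > 0` everywhere,
`g` is differentiable with `g′ = x`, and `g` is strictly convex on `ℝ`. -/
theorem potential_strictly_convex
    (α' κ : ℝ) (hα : 0 < α') (hκ : κ < 0)
    (x g : ℝ → ℝ)
    (hx : ∀ u : ℝ, x u = (u + Real.sqrt (u ^ 2 - 2 * α' * κ)) / 2)
    (hg : ∀ u : ℝ, g u = (1 / 2) * ((x u) ^ 2 - α' * κ * Real.log (x u))) :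
    (∀ u : ℝ, 0 < x u) ∧ (∀ u : ℝ, HasDerivAt g (x u) u) ∧
      StrictConvexOn ℝ Set.univ g := by
  set s : ℝ → ℝ := fun u => Real.sqrt (u ^ 2 - 2 * α' * κ) with hs_def
  have hin : ∀ u : ℝ, 0 < u ^ 2 - 2 * α' * κ := by
    intro u; nlinarith [sq_nonneg u, mul_pos hα (neg_pos.mpr hκ)]
  have hs_pos : ∀ u : ℝ, 0 < s u := fun u => Real.sqrt_pos.mpr (hin u)
  have hs_sq : ∀ u : ℝ, (s u) ^ 2 = u ^ 2 - 2 * α' * κ := fun u =>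
    Real.sq_sqrt (hin u).le
  have hs_gt : ∀ u : ℝ, -u < s u := by
    intro u
    rcases le_or_gt u 0 with h | h
    · have h1 : (-u) ^ 2 < (s u) ^ 2 := by
        rw [hs_sq]; nlinarith [mul_pos hα (neg_pos.mpr hκ)]
      nlinarith [hs_pos u]
    · linarith [hs_pos u]
  have hx_pos : ∀ u : ℝ, 0 < x u := by
    intro u; rw [hx u]; have := hs_gt u; simp only [hs_def] at this; linarith
  -- derivative of s
  have hs_deriv : ∀ u : ℝ, HasDerivAt s (u / s u) u := by
    intro u
    have h1 : HasDerivAt (fun u : ℝ => u ^ 2 - 2 * α' * κ) (2 * u) u := by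
      simpa using ((hasDerivAt_pow 2 u).sub_const (2 * α' * κ))
    have h2 := h1.sqrt (ne_of_gt (hin u))
    convert h2 using 1
    field_simp [hs_def]
    ring
  have hx_deriv : ∀ u : ℝ, HasDerivAt x (x u / s u) u := by
    intro u
    have h1 : HasDerivAt (fun v => (v + s v) / 2) ((1 + u / s u) / 2) u :=
      ((hasDerivAt_id u).add (hs_deriv u)).div_const 2
    have h2 : HasDerivAt x ((1 + u / s u) / 2) u := by
      apply h1.congr_of_eventuallyEq
      filter_upwards with v using (hx v)
    convert h2 using 1
    have hsne := (hs_pos u).ne'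
    have hxu : x u = (u + s u) / 2 := hx u
    rw [hxu]
    field_simp
    ring
  -- key identity: 2 x u ^ 2 - α' κ = 2 * x u * s u
  have hkey : ∀ u : ℝ, 2 * (x u) ^ 2 - α' * κ = 2 * x u * s u := by
    intro u
    have h1 := hs_sq u
    rw [hx u]
    nlinarith [h1]
  have hg_deriv : ∀ u : ℝ, HasDerivAt g (x u) u := by
    intro u
    have hxne := (hx_pos u).ne'
    have hsne := (hs_pos u).ne'
    have hlog : HasDerivAt (fun v => Real.log (x v)) (x u / s u / x u) u :=
      (hx_deriv u).log hxne
    have hpow : HasDerivAt (fun v => (x v) ^ 2) (2 * x u * (x u / s u)) u := by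
      have := (hx_deriv u).pow 2
      have h' : HasDerivAt (x ^ 2) (2 * x u * (x u / s u)) u := by simpa [mul_comm] using this
      exact h'
    have h1 : HasDerivAt (fun v => (1 / 2) * ((x v) ^ 2 - α' * κ * Real.log (x v)))
        ((1 / 2) * (2 * x u * (x u / s u) - α' * κ * ((x u / s u) / x u))) u :=
      (hpow.sub (hlog.const_mul (α' * κ))).const_mul (1 / 2)
    have h2 : HasDerivAt g
        ((1 / 2) * (2 * x u * (x u / s u) - α' * κ * ((x u / s u) / x u))) u := by
      apply h1.congr_of_eventuallyEq
      filter_upwards with v using (hg v)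
    convert h2 using 1
    have hk := hkey u
    field_simp
    linear_combination -hk
  refine ⟨hx_pos, hg_deriv, ?_⟩
  have hderiv_g : deriv g = x := funext fun u => (hg_deriv u).deriv
  have hxmono : StrictMono x := by
    apply strictMono_of_deriv_pos
    intro u
    rw [(hx_deriv u).deriv]
    exact div_pos (hx_pos u) (hs_pos u)
  exact StrictMonoOn.strictConvexOn_of_deriv convex_univ
    (fun u _ => (hg_deriv u).continuousAt.continuousWithinAt)
    (by rw [interior_univ, hderiv_g]; exact hxmono.strictMonoOn _)
end

section
/- Let 0 < a < 1 be real. Then for every ζ ∈ ℂ one has 4|ζ⁸ − a⁸|/(1+|ζ|²)⁴ < 4, and the supremum over ζ ∈ ℂ of the quantity 4|ζ⁸ − a⁸|/(1+|ζ|²)⁴ equals 4. -/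
/-- For `0 < a < 1`, the quantity `4|ζ⁸ − a⁸|/(1+|ζ|²)⁴` (minus the Gauss curvature of the
canonical metric on the genus 3 example) is everywhere strictly less than `4`, and its
supremum over `ζ ∈ ℂ` equals `4`. -/
theorem neg_curvature_lt_four_and_sup_eq_four
    (a : ℝ) (ha0 : 0 < a) (ha1 : a < 1) :
    (∀ ζ : ℂ, 4 * ‖ζ ^ 8 - (a : ℂ) ^ 8‖ / (1 + ‖ζ‖ ^ 2) ^ 4 < 4) ∧
    (⨆ ζ : ℂ, 4 * ‖ζ ^ 8 - (a : ℂ) ^ 8‖ / (1 + ‖ζ‖ ^ 2) ^ 4) = 4 := by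
  have ha8 : a ^ 8 < 1 := pow_lt_one₀ ha0.le ha1 (by norm_num)
  have key : ∀ ζ : ℂ, 4 * ‖ζ ^ 8 - (a : ℂ) ^ 8‖ / (1 + ‖ζ‖ ^ 2) ^ 4 < 4 := by
    intro ζ
    set r := ‖ζ‖ with hr
    have hr0 : 0 ≤ r := norm_nonneg ζ
    have hpos : (0:ℝ) < (1 + r ^ 2) ^ 4 := by positivity
    rw [div_lt_iff₀ hpos]
    have h1 : ‖ζ ^ 8 - (a:ℂ)^8‖ ≤ r ^ 8 + a ^ 8 := by
      have := norm_sub_le (ζ ^ 8) ((a:ℂ) ^ 8)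
      simp only [norm_pow, Complex.norm_real, Real.norm_eq_abs, abs_of_pos ha0] at this
      simpa [hr] using this
    nlinarith [sq_nonneg r, pow_nonneg hr0 4, pow_nonneg hr0 6, pow_nonneg hr0 8]
  refine ⟨key, le_antisymm (ciSup_le fun ζ => (key ζ).le) ?_⟩
  have hbdd : BddAbove (Set.range fun ζ : ℂ =>
      4 * ‖ζ ^ 8 - (a : ℂ) ^ 8‖ / (1 + ‖ζ‖ ^ 2) ^ 4) := by
    refine ⟨4, ?_⟩
    rintro x ⟨ζ, rfl⟩
    exact (key ζ).le
  refine le_of_forall_lt fun c hc => ?_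
  obtain ⟨n, hn⟩ := exists_nat_gt (64 / (4 - c))
  have h4c : (0:ℝ) < 4 - c := by linarith
  have hn1 : (1:ℝ) ≤ n := by
    have : (0:ℝ) < 64 / (4 - c) := by positivity
    have : (0:ℝ) < n := lt_trans this hn
    exact_mod_cast Nat.one_le_iff_ne_zero.mpr (by exact_mod_cast this.ne')
  have hnt : (64:ℝ) < (4 - c) * n := by
    rw [div_lt_iff₀ h4c] at hn; linarith
  have hval : c < 4 * ‖((n:ℝ):ℂ) ^ 8 - (a : ℂ) ^ 8‖
      / (1 + ‖((n:ℝ):ℂ)‖ ^ 2) ^ 4 := by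
    have habs : ‖((n:ℝ):ℂ)‖ = (n:ℝ) := by
      rw [Complex.norm_real, Real.norm_eq_abs]; exact abs_of_pos (by linarith)
    have habs2 : ‖((n:ℝ):ℂ) ^ 8 - (a : ℂ) ^ 8‖ = (n:ℝ)^8 - a^8 := by
      have : (((n:ℝ):ℂ) ^ 8 - (a : ℂ) ^ 8) = ((((n:ℝ)^8 - a^8 : ℝ)):ℂ) := by push_cast; ring
      rw [this, Complex.norm_real, Real.norm_eq_abs, abs_of_pos]
      have : (1:ℝ) ≤ (n:ℝ)^8 := one_le_pow₀ hn1
      linarith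
    rw [habs, habs2]
    set t : ℝ := (n:ℝ)
    have hpos : (0:ℝ) < (1 + t ^ 2) ^ 4 := by positivity
    rw [lt_div_iff₀ hpos]
    have hnt2 : (64:ℝ) * t ≤ (4 - c) * t^2 := by nlinarith
    nlinarith [pow_pos (show (0:ℝ) < t by linarith) 6, pow_pos (show (0:ℝ) < t by linarith) 8,
      one_le_pow₀ (n:=6) hn1, one_le_pow₀ (n:=2) hn1, one_le_pow₀ (n:=4) hn1]
  exact lt_of_lt_of_le hval (le_ciSup hbdd (((n:ℝ):ℂ)))
end

section
/- Let t ∈ ℝ, α′ > 0, θ ∈ ℝ, and let s, a ∈ (0,1) be such that s⁴e^{iθ} ≠ a⁸. Then √(t²(1−s²)² + 8α′|s⁴e^{iθ} − a⁸|)/|s⁴e^{iθ} − a⁸| > √(t²(1−s²)² + 8α′|e^{iθ} − s⁴a⁸|)/|e^{iθ} − s⁴a⁸|. -/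
/-- Auxiliary: the map `x ↦ √(c + 8α'x)/x` is strictly decreasing for `x > 0`. -/
lemma genus_three_aux (c α' A B : ℝ) (hc : 0 ≤ c) (hα : 0 < α')
    (hA : 0 < A) (hAB : A < B) :
    Real.sqrt (c + 8 * α' * B) / B < Real.sqrt (c + 8 * α' * A) / A := by
  have hB : 0 < B := hA.trans hAB
  rw [div_lt_div_iff₀ hB hA]
  have h1 : 0 ≤ c + 8 * α' * A := by positivity
  have h2 : 0 ≤ c + 8 * α' * B := by positivity
  have key : (Real.sqrt (c + 8 * α' * B) * A) ^ 2 < (Real.sqrt (c + 8 * α' * A) * B) ^ 2 := by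
    rw [mul_pow, mul_pow, Real.sq_sqrt h1, Real.sq_sqrt h2]
    have hBA : 0 < B - A := by linarith
    nlinarith [mul_nonneg hc (by nlinarith : (0:ℝ) ≤ B ^ 2 - A ^ 2),
      mul_pos (mul_pos hα (mul_pos hA hB)) hBA]
  exact lt_of_pow_lt_pow_left₀ 2 (by positivity) key

/-- The pointwise inequality between the two terms in the second double integral of the
genus 3 example: for `t ∈ ℝ`, `α′ > 0`, `θ ∈ ℝ`, and `s, a ∈ (0,1)` with `s⁴e^{iθ} ≠ a⁸`,
`√(t²(1−s²)² + 8α′|s⁴e^{iθ} − a⁸|)/|s⁴e^{iθ} − a⁸|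
  > √(t²(1−s²)² + 8α′|e^{iθ} − s⁴a⁸|)/|e^{iθ} − s⁴a⁸|`. -/
theorem genus_three_pointwise_inequality
    (t α' θ s a : ℝ) (hα : 0 < α')
    (hs0 : 0 < s) (hs1 : s < 1) (ha0 : 0 < a) (ha1 : a < 1)
    (hne : (s : ℂ) ^ 4 * Complex.exp (θ * Complex.I) ≠ (a : ℂ) ^ 8) :
    Real.sqrt (t ^ 2 * (1 - s ^ 2) ^ 2
          + 8 * α' * ‖(s : ℂ) ^ 4 * Complex.exp (θ * Complex.I) - (a : ℂ) ^ 8‖)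
        / ‖(s : ℂ) ^ 4 * Complex.exp (θ * Complex.I) - (a : ℂ) ^ 8‖
      > Real.sqrt (t ^ 2 * (1 - s ^ 2) ^ 2
          + 8 * α' * ‖Complex.exp (θ * Complex.I) - (s : ℂ) ^ 4 * (a : ℂ) ^ 8‖)
        / ‖Complex.exp (θ * Complex.I) - (s : ℂ) ^ 4 * (a : ℂ) ^ 8‖ := by
  set z := Complex.exp (θ * Complex.I) with hz
  set A := ‖(s : ℂ) ^ 4 * z - (a : ℂ) ^ 8‖ with hAdef
  set B := ‖z - (s : ℂ) ^ 4 * (a : ℂ) ^ 8‖ with hBdef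
  have hA : 0 < A := by
    rw [hAdef]
    exact (norm_pos_iff.mpr (sub_ne_zero.mpr hne))
  -- compute squares via normSq
  have habsz : ‖z‖ = 1 := Complex.norm_exp_ofReal_mul_I θ
  have hnz : Complex.normSq z = 1 := by
    have := Complex.sq_norm z
    rw [habsz] at this; linarith
  have hA2 : A ^ 2 = s ^ 8 + a ^ 16 - 2 * (s ^ 4 * a ^ 8) * z.re := by
    rw [hAdef, Complex.sq_norm, Complex.normSq_sub]
    simp [Complex.normSq_mul, Complex.normSq_ofReal, hnz,
      ← Complex.ofReal_pow, Complex.mul_re, Complex.mul_im]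
    ring
  have hB2 : B ^ 2 = 1 + s ^ 8 * a ^ 16 - 2 * (s ^ 4 * a ^ 8) * z.re := by
    rw [hBdef, Complex.sq_norm, Complex.normSq_sub]
    simp [Complex.normSq_mul, Complex.normSq_ofReal, hnz,
      ← Complex.ofReal_pow, Complex.mul_re, Complex.mul_im]
    ring
  have hAB : A < B := by
    have hsq : A ^ 2 < B ^ 2 := by
      rw [hA2, hB2]
      nlinarith [pow_lt_one₀ (le_of_lt hs0) hs1 (n := 8) (by norm_num),
        pow_lt_one₀ (le_of_lt ha0) ha1 (n := 16) (by norm_num),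
        pow_pos hs0 8, pow_pos ha0 16]
    exact lt_of_pow_lt_pow_left₀ 2 (norm_nonneg _) hsq
  exact genus_three_aux (t ^ 2 * (1 - s ^ 2) ^ 2) α' A B (by positivity) hα hA hAB
end

section
/- Let 0 < a < 1, α′ > 0, and t ∈ ℝ. For ζ ∈ ℂ define E(ζ) = t(1−|ζ|²) + √(t²(1−|ζ|²)² + 8α′|ζ⁸ − a⁸|/(1+|ζ|²)²). Then the functions ζ ↦ Re(ζ)·E(ζ)/|ζ⁸ − a⁸| and ζ ↦ Im(ζ)·E(ζ)/|ζ⁸ − a⁸| (defined away from the eight zeros of ζ⁸ − a⁸, extended arbitrarily there) are Lebesgue integrable on ℂ, and both of their integrals over ℂ with respect to Lebesgue measure vanish. -/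
open MeasureTheory

lemma aux_int_1d (R : ℝ) :
    IntegrableOn (fun x : ℝ => |x| ^ (-(1/2) : ℝ)) (Set.Ioo (-R) R) := by
  have hpos : IntegrableOn (fun x : ℝ => |x| ^ (-(1/2) : ℝ)) (Set.Ioc 0 R) := by
    have h := (intervalIntegral.intervalIntegrable_rpow' (a := 0) (b := R)
        (r := (-(1/2) : ℝ)) (by norm_num)).1
    refine h.congr_fun ?_ measurableSet_Ioc
    intro x hx
    show x ^ (-(1/2) : ℝ) = |x| ^ (-(1/2) : ℝ)
    rw [abs_of_pos hx.1]
  have hzero : IntegrableOn (fun x : ℝ => |x| ^ (-(1/2) : ℝ)) ({0} : Set ℝ) := by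
    unfold IntegrableOn
    rw [Measure.restrict_eq_zero.mpr (measure_singleton 0)]
    exact integrable_zero_measure
  have hIcc : IntegrableOn (fun x : ℝ => |x| ^ (-(1/2) : ℝ)) (Set.Icc 0 R) := by
    refine (hzero.union hpos).mono_set ?_
    intro x hx
    rcases eq_or_lt_of_le hx.1 with h | h
    · exact Or.inl (by simp [← h])
    · exact Or.inr ⟨h, hx.2⟩
  have hneg : IntegrableOn (fun x : ℝ => |x| ^ (-(1/2) : ℝ)) (Set.Ico (-R) 0) := by
    have h1 : Integrable ((Set.Ioc (0:ℝ) R).indicator (fun x => |x| ^ (-(1/2) : ℝ))) :=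
      (integrable_indicator_iff measurableSet_Ioc).2 hpos
    have h2 := h1.comp_neg
    have h3 : (fun t : ℝ => (Set.Ioc (0:ℝ) R).indicator (fun x => |x| ^ (-(1/2) : ℝ)) (-t))
        = (Set.Ico (-R) (0:ℝ)).indicator (fun x => |x| ^ (-(1/2) : ℝ)) := by
      funext x
      by_cases hx : x ∈ Set.Ico (-R) (0:ℝ)
      · have hx' : -x ∈ Set.Ioc (0:ℝ) R := ⟨by linarith [hx.2], by linarith [hx.1]⟩
        rw [Set.indicator_of_mem hx', Set.indicator_of_mem hx, abs_neg]
      · have hx' : -x ∉ Set.Ioc (0:ℝ) R := by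
          intro hc
          exact hx ⟨by linarith [hc.2], by linarith [hc.1]⟩
        rw [Set.indicator_of_notMem hx', Set.indicator_of_notMem hx]
    rw [h3] at h2
    exact (integrable_indicator_iff measurableSet_Ico).1 h2
  refine (hneg.union hIcc).mono_set ?_
  intro x hx
  rcases lt_or_ge x 0 with h | h
  · exact Or.inl ⟨hx.1.le, h⟩
  · exact Or.inr ⟨h, hx.2.le⟩

lemma aux_int_1d_shift (R c : ℝ) :
    IntegrableOn (fun x : ℝ => |x - c| ^ (-(1/2) : ℝ)) (Set.Ioo (c - R) (c + R)) := by
  have h1 : Integrable ((Set.Ioo (-R) R).indicator fun x : ℝ => |x| ^ (-(1/2) : ℝ)) :=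
    (integrable_indicator_iff measurableSet_Ioo).2 (aux_int_1d R)
  have h2 := h1.comp_sub_right c
  have h3 : (fun x : ℝ => (Set.Ioo (-R) R).indicator (fun y : ℝ => |y| ^ (-(1/2) : ℝ)) (x - c))
      = (Set.Ioo (c - R) (c + R)).indicator fun x : ℝ => |x - c| ^ (-(1/2) : ℝ) := by
    funext x
    by_cases hx : x ∈ Set.Ioo (c - R) (c + R)
    · have hx' : x - c ∈ Set.Ioo (-R) R := ⟨by linarith [hx.1], by linarith [hx.2]⟩
      rw [Set.indicator_of_mem hx', Set.indicator_of_mem hx]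
    · have hx' : x - c ∉ Set.Ioo (-R) R := fun hc => hx ⟨by linarith [hc.1], by linarith [hc.2]⟩
      rw [Set.indicator_of_notMem hx', Set.indicator_of_notMem hx]
  rw [h3] at h2
  exact (integrable_indicator_iff measurableSet_Ioo).1 h2

lemma aux_null_re (c : ℝ) : volume {ζ : ℂ | ζ.re = c} = 0 := by
  have hs : MeasurableSet (({c} : Set ℝ) ×ˢ (Set.univ : Set ℝ)) :=
    (measurableSet_singleton c).prod MeasurableSet.univ
  have h := Complex.volume_preserving_equiv_real_prod.measure_preimage hs.nullMeasurableSet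
  have hset : Complex.measurableEquivRealProd ⁻¹' (({c} : Set ℝ) ×ˢ Set.univ)
      = {ζ : ℂ | ζ.re = c} := by
    ext ζ
    simp [Complex.measurableEquivRealProd_apply, eq_comm]
  have hprod : (volume : Measure (ℝ × ℝ)) (({c} : Set ℝ) ×ˢ Set.univ) = 0 := by
    rw [Measure.volume_eq_prod, Measure.prod_prod, measure_singleton, zero_mul]
  rw [← hset, h, hprod]

lemma aux_null_im (c : ℝ) : volume {ζ : ℂ | ζ.im = c} = 0 := by
  have hs : MeasurableSet ((Set.univ : Set ℝ) ×ˢ ({c} : Set ℝ)) :=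
    MeasurableSet.univ.prod (measurableSet_singleton c)
  have h := Complex.volume_preserving_equiv_real_prod.measure_preimage hs.nullMeasurableSet
  have hset : Complex.measurableEquivRealProd ⁻¹' ((Set.univ : Set ℝ) ×ˢ ({c} : Set ℝ))
      = {ζ : ℂ | ζ.im = c} := by
    ext ζ
    simp [Complex.measurableEquivRealProd_apply, eq_comm]
  have hprod : (volume : Measure (ℝ × ℝ)) ((Set.univ : Set ℝ) ×ˢ ({c} : Set ℝ)) = 0 := by
    rw [Measure.volume_eq_prod, Measure.prod_prod, measure_singleton, mul_zero]
  rw [← hset, h, hprod]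

lemma aux_transfer {g : ℝ × ℝ → ℝ} {T : Set (ℝ × ℝ)} (hT : MeasurableSet T)
    (hg : IntegrableOn g T) :
    IntegrableOn (fun ζ : ℂ => g (Complex.measurableEquivRealProd ζ))
      (Complex.measurableEquivRealProd ⁻¹' T) := by
  have h := Complex.volume_preserving_equiv_real_prod.restrict_preimage hT
  exact (h.integrable_comp_emb Complex.measurableEquivRealProd.measurableEmbedding).2 hg

lemma aux_inv_abs (z : ℂ) (R : ℝ) :
    IntegrableOn (fun ζ : ℂ => (‖ζ - z‖)⁻¹) (Metric.ball z R) := by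
  set q : ℝ := -(1/2) with hq
  set g : ℝ × ℝ → ℝ := fun p => |p.1 - z.re| ^ q * |p.2 - z.im| ^ q with hgdef
  set T : Set (ℝ × ℝ) :=
    Set.Ioo (z.re - R) (z.re + R) ×ˢ Set.Ioo (z.im - R) (z.im + R) with hTdef
  have hTm : MeasurableSet T := measurableSet_Ioo.prod measurableSet_Ioo
  have hgT : IntegrableOn g T := by
    rw [IntegrableOn, hTdef, Measure.volume_eq_prod, ← Measure.prod_restrict]
    exact Integrable.mul_prod (aux_int_1d_shift R z.re) (aux_int_1d_shift R z.im)
  have htrans := aux_transfer hTm hgT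
  have hsub : Metric.ball z R ⊆ Complex.measurableEquivRealProd ⁻¹' T := by
    intro ζ hζ
    have hd : ‖ζ - z‖ < R := by
      rwa [Metric.mem_ball, Complex.dist_eq] at hζ
    have hre : |ζ.re - z.re| < R :=
      lt_of_le_of_lt (by simpa using Complex.abs_re_le_norm (ζ - z)) hd
    have him : |ζ.im - z.im| < R :=
      lt_of_le_of_lt (by simpa using Complex.abs_im_le_norm (ζ - z)) hd
    rw [Set.mem_preimage, Complex.measurableEquivRealProd_apply, hTdef, Set.mem_prod]
    rw [abs_lt] at hre him
    exact ⟨⟨by linarith [hre.1], by linarith [hre.2]⟩, ⟨by linarith [him.1], by linarith [him.2]⟩⟩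
  have hmeas : AEStronglyMeasurable (fun ζ : ℂ => (‖ζ - z‖)⁻¹)
      (volume.restrict (Metric.ball z R)) := by
    refine (Measurable.aestronglyMeasurable ?_)
    exact (continuous_norm.comp (continuous_id.sub continuous_const)).measurable.inv
  refine Integrable.mono' (htrans.mono_set hsub) hmeas ?_
  have h1 : ∀ᵐ ζ : ℂ, ζ.re ≠ z.re := by
    rw [MeasureTheory.ae_iff]
    convert aux_null_re z.re using 2
    simp
  have h2 : ∀ᵐ ζ : ℂ, ζ.im ≠ z.im := by
    rw [MeasureTheory.ae_iff]
    convert aux_null_im z.im using 2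
    simp
  refine ae_restrict_of_ae ((h1.and h2).mono ?_)
  rintro ζ ⟨hr, hi⟩
  set u : ℝ := |ζ.re - z.re| with hu
  set v : ℝ := |ζ.im - z.im| with hv
  have hu0 : 0 < u := abs_pos.2 (sub_ne_zero.2 hr)
  have hv0 : 0 < v := abs_pos.2 (sub_ne_zero.2 hi)
  have habs : ‖ζ - z‖ = Real.sqrt ((ζ.re - z.re) ^ 2 + (ζ.im - z.im) ^ 2) := by
    rw [Complex.norm_def, Complex.normSq_apply, Complex.sub_re, Complex.sub_im]
    ring_nf
  have hkey : Real.sqrt u * Real.sqrt v ≤ ‖ζ - z‖ := by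
    rw [habs, ← Real.sqrt_mul hu0.le]
    apply Real.sqrt_le_sqrt
    have h1 : u ^ 2 = (ζ.re - z.re) ^ 2 := sq_abs _
    have h2 : v ^ 2 = (ζ.im - z.im) ^ 2 := sq_abs _
    nlinarith [sq_nonneg (u - v)]
  have hpos : 0 < Real.sqrt u * Real.sqrt v := by positivity
  have hnorm : ‖(‖ζ - z‖)⁻¹‖ = (‖ζ - z‖)⁻¹ := by
    rw [Real.norm_eq_abs, abs_of_nonneg (by positivity)]
  rw [hnorm]
  calc (‖ζ - z‖)⁻¹ ≤ (Real.sqrt u * Real.sqrt v)⁻¹ :=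
        inv_anti₀ hpos hkey
    _ = (Real.sqrt u)⁻¹ * (Real.sqrt v)⁻¹ := by rw [mul_inv]
    _ = u ^ q * v ^ q := by
        rw [hq, Real.rpow_neg hu0.le, Real.rpow_neg hv0.le,
          ← Real.sqrt_eq_rpow, ← Real.sqrt_eq_rpow]
    _ = g (Complex.measurableEquivRealProd ζ) := by
        rw [Complex.measurableEquivRealProd_apply]
lemma aux_L3 (a : ℝ) (ha0 : 0 < a) :
    IntegrableOn (fun ζ : ℂ => (‖ζ ^ 8 - (a:ℂ) ^ 8‖)⁻¹)
      (Metric.closedBall (0:ℂ) 2) := by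
  have hDcont : Continuous fun ζ : ℂ => ‖ζ ^ 8 - (a:ℂ) ^ 8‖ :=
    continuous_norm.comp ((continuous_pow 8).sub continuous_const)
  set Z : Set ℂ := {z : ℂ | z ^ 8 = (a:ℂ) ^ 8} with hZdef
  have hZfin : Z.Finite := by
    have h := Polynomial.finite_setOf_isRoot
      (p := Polynomial.X ^ 8 - Polynomial.C ((a:ℂ) ^ 8))
      (Polynomial.X_pow_sub_C_ne_zero (by norm_num) _)
    refine Set.Finite.subset h ?_
    intro z hz
    simp only [Set.mem_setOf_eq, Polynomial.IsRoot, Polynomial.eval_sub, Polynomial.eval_pow,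
      Polynomial.eval_X, Polynomial.eval_C, sub_eq_zero]
    exact hz
  have key : ∀ z ∈ Z, ∃ r > 0,
      IntegrableOn (fun ζ : ℂ => (‖ζ ^ 8 - (a:ℂ) ^ 8‖)⁻¹) (Metric.ball z r) := by
    intro z hz
    have hz8 : z ^ 8 = (a:ℂ) ^ 8 := hz
    have habs : ‖z‖ = a := by
      have h8 : ‖z‖ ^ 8 = a ^ 8 := by
        rw [← norm_pow, hz8, ← Complex.ofReal_pow, Complex.norm_real, Real.norm_eq_abs,
          abs_of_pos (pow_pos ha0 8)]
      rcases lt_trichotomy (‖z‖) a with h | h | h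
      · have := pow_lt_pow_left₀ h (norm_nonneg z) (by norm_num : (8:ℕ) ≠ 0)
        exact absurd h8 (ne_of_lt this)
      · exact h
      · have := pow_lt_pow_left₀ h ha0.le (by norm_num : (8:ℕ) ≠ 0)
        exact absurd h8.symm (ne_of_lt this)
    set gz : ℂ → ℂ := fun ζ => ∑ i ∈ Finset.range 8, ζ ^ i * z ^ (7 - i) with hgz
    have hfact : ∀ ζ : ℂ, ζ ^ 8 - (a:ℂ) ^ 8 = gz ζ * (ζ - z) := by
      intro ζ
      rw [← hz8, hgz]
      exact (geom_sum₂_mul ζ z 8).symm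
    have hgzz : ‖gz z‖ = 8 * a ^ 7 := by
      have : gz z = 8 * z ^ 7 := by
        show (∑ i ∈ Finset.range 8, z ^ i * z ^ (7 - i)) = 8 * z ^ 7
        have : ∀ i ∈ Finset.range 8, z ^ i * z ^ (7 - i) = z ^ 7 := by
          intro i hi
          rw [← pow_add]
          congr 1
          have := Finset.mem_range.1 hi
          omega
        rw [Finset.sum_congr rfl this, Finset.sum_const, Finset.card_range]
        push_cast
        ring
      rw [this, norm_mul, norm_pow, habs]
      simp
    have hgzcont : Continuous gz := by
      apply continuous_finset_sum
      intro i _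
      exact (continuous_pow i).mul continuous_const
    have hopen : IsOpen {ζ : ℂ | 4 * a ^ 7 < ‖gz ζ‖} :=
      isOpen_lt continuous_const (continuous_norm.comp hgzcont)
    have hzmem : z ∈ {ζ : ℂ | 4 * a ^ 7 < ‖gz ζ‖} := by
      rw [Set.mem_setOf_eq, hgzz]
      nlinarith [pow_pos ha0 7]
    obtain ⟨r, hr0, hrsub⟩ := Metric.isOpen_iff.1 hopen z hzmem
    refine ⟨r, hr0, ?_⟩
    have hbase := (aux_inv_abs z r).const_mul ((4 * a ^ 7)⁻¹)
    refine Integrable.mono' hbase ?_ ?_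
    · exact (hDcont.measurable.inv).aestronglyMeasurable
    · refine ae_restrict_of_forall_mem measurableSet_ball ?_
      intro ζ hζ
      have hgζ : 4 * a ^ 7 < ‖gz ζ‖ := hrsub hζ
      have hnn : (0:ℝ) ≤ (‖ζ ^ 8 - (a:ℂ) ^ 8‖)⁻¹ :=
        inv_nonneg.2 (norm_nonneg _)
      rw [Real.norm_eq_abs, abs_of_nonneg hnn]
      by_cases hzz : ζ = z
      · subst hzz
        rw [hfact]
        simp
      · have hd : ‖ζ ^ 8 - (a:ℂ) ^ 8‖ = ‖gz ζ‖ * ‖ζ - z‖ := by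
          rw [hfact, norm_mul]
        have hsubpos : 0 < ‖ζ - z‖ := by
          rw [norm_pos_iff, sub_ne_zero]
          exact hzz
        have hlow : 4 * a ^ 7 * ‖ζ - z‖ ≤ ‖ζ ^ 8 - (a:ℂ) ^ 8‖ := by
          rw [hd]
          exact mul_le_mul_of_nonneg_right hgζ.le hsubpos.le
        have hlowpos : 0 < 4 * a ^ 7 * ‖ζ - z‖ := by positivity
        calc (‖ζ ^ 8 - (a:ℂ) ^ 8‖)⁻¹
            ≤ (4 * a ^ 7 * ‖ζ - z‖)⁻¹ := inv_anti₀ hlowpos hlow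
          _ = (4 * a ^ 7)⁻¹ * (‖ζ - z‖)⁻¹ := by rw [mul_inv]
  choose! r hr0 hri using key
  set U : Set ℂ := ⋃ z ∈ hZfin.toFinset, Metric.ball z (r z) with hUdef
  have hUopen : IsOpen U := isOpen_biUnion fun _ _ => Metric.isOpen_ball
  have hK : IsCompact (Metric.closedBall (0:ℂ) 2 \ U) :=
    (isCompact_closedBall _ _).diff hUopen
  have hKint : IntegrableOn (fun ζ : ℂ => (‖ζ ^ 8 - (a:ℂ) ^ 8‖)⁻¹)
      (Metric.closedBall (0:ℂ) 2 \ U) := by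
    refine ContinuousOn.integrableOn_compact hK ?_
    refine ContinuousOn.inv₀ hDcont.continuousOn ?_
    intro ζ hζ h0
    have hzero : ζ ^ 8 = (a:ℂ) ^ 8 := by
      have := norm_eq_zero.1 h0
      rwa [sub_eq_zero] at this
    have hmem : ζ ∈ U := by
      rw [hUdef]
      refine Set.mem_biUnion (hZfin.mem_toFinset.2 hzero) ?_
      exact Metric.mem_ball_self (hr0 ζ hzero)
    exact hζ.2 hmem
  have hUint : IntegrableOn (fun ζ : ℂ => (‖ζ ^ 8 - (a:ℂ) ^ 8‖)⁻¹) U := by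
    rw [hUdef]
    rw [integrableOn_finset_iUnion]
    intro z hzmem
    exact hri z (hZfin.mem_toFinset.1 hzmem)
  refine (hKint.union hUint).mono_set ?_
  intro ζ hζ
  by_cases h : ζ ∈ U
  · exact Or.inr h
  · exact Or.inl ⟨hζ, h⟩

lemma aux_L4 (a : ℝ) (ha0 : 0 < a) (ha1 : a < 1) :
    Integrable (fun ζ : ℂ =>
      ‖ζ‖ * (1 + ‖ζ‖ ^ 2) / ‖ζ ^ 8 - (a:ℂ) ^ 8‖) := by
  have hDcont : Continuous fun ζ : ℂ => ‖ζ ^ 8 - (a:ℂ) ^ 8‖ :=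
    continuous_norm.comp ((continuous_pow 8).sub continuous_const)
  have hNcont : Continuous fun ζ : ℂ => ‖ζ‖ * (1 + ‖ζ‖ ^ 2) :=
    continuous_norm.mul (continuous_const.add (continuous_norm.pow 2))
  have hmeas : AEStronglyMeasurable (fun ζ : ℂ =>
      ‖ζ‖ * (1 + ‖ζ‖ ^ 2) / ‖ζ ^ 8 - (a:ℂ) ^ 8‖) volume :=
    (hNcont.measurable.div hDcont.measurable).aestronglyMeasurable
  rw [← integrableOn_univ, ← Set.union_compl_self (Metric.closedBall (0:ℂ) 2)]
  refine IntegrableOn.union ?_ ?_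
  · -- on the closed ball, dominate by 10 * (abs (ζ^8 - a^8))⁻¹
    refine Integrable.mono' ((aux_L3 a ha0).const_mul 10) (hmeas.restrict) ?_
    refine ae_restrict_of_forall_mem measurableSet_closedBall ?_
    intro ζ hζ
    have hζ2 : ‖ζ‖ ≤ 2 := by
      rwa [Metric.mem_closedBall, Complex.dist_eq, sub_zero] at hζ
    have hnum : ‖ζ‖ * (1 + ‖ζ‖ ^ 2) ≤ 10 := by
      nlinarith [norm_nonneg ζ]
    have hnn : (0:ℝ) ≤ ‖ζ‖ * (1 + ‖ζ‖ ^ 2) / ‖ζ ^ 8 - (a:ℂ) ^ 8‖ := by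
      positivity
    rw [Real.norm_eq_abs, abs_of_nonneg hnn, div_eq_mul_inv]
    exact mul_le_mul_of_nonneg_right hnum (inv_nonneg.2 (norm_nonneg _))
  · -- off the closed ball, dominate by 16 * (1 + ‖ζ‖)^(-5)
    have hibase : Integrable (fun ζ : ℂ => 16 * (1 + ‖ζ‖) ^ (-(5:ℝ))) := by
      refine Integrable.const_mul ?_ 16
      refine integrable_one_add_norm ?_
      rw [Complex.finrank_real_complex]
      norm_num
    refine Integrable.mono' hibase.integrableOn (hmeas.restrict) ?_
    refine ae_restrict_of_forall_mem measurableSet_closedBall.compl ?_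
    intro ζ hζ
    set s : ℝ := ‖ζ‖ with hs
    have hζ2 : 2 < s := by
      rw [Set.mem_compl_iff, Metric.mem_closedBall, not_le, Complex.dist_eq, sub_zero] at hζ
      exact hζ
    have hD : s ^ 8 - 1 ≤ ‖ζ ^ 8 - (a:ℂ) ^ 8‖ := by
      have h1 := norm_sub_norm_le (ζ ^ 8) ((a:ℂ) ^ 8)
      simp only [norm_pow, Complex.norm_real, Real.norm_eq_abs] at h1
      rw [abs_of_pos ha0] at h1
      have ha8 : a ^ 8 ≤ 1 := pow_le_one₀ ha0.le ha1.le
      linarith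
    have hs8 : (256:ℝ) ≤ s ^ 8 := by
      calc (256:ℝ) = 2 ^ 8 := by norm_num
        _ ≤ s ^ 8 := pow_le_pow_left₀ (by norm_num) hζ2.le 8
    have hDpos : 0 < s ^ 8 - 1 := by linarith
    have hrpow : (1 + ‖ζ‖) ^ (-(5:ℝ)) = ((1 + s) ^ (5:ℕ))⁻¹ := by
      rw [← hs, Real.rpow_neg (by positivity), ← Real.rpow_natCast (1 + s) 5]
      norm_num
    have hnn : (0:ℝ) ≤ s * (1 + s ^ 2) / ‖ζ ^ 8 - (a:ℂ) ^ 8‖ := by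
      positivity
    rw [Real.norm_eq_abs, abs_of_nonneg hnn, hrpow]
    have h16 : (16:ℝ) * ((1 + s) ^ (5:ℕ))⁻¹ = 16 / (1 + s) ^ (5:ℕ) := by
      rw [div_eq_mul_inv]
    rw [h16, div_le_div_iff₀ (lt_of_lt_of_le hDpos hD) (by positivity)]
    have hstep : s * (1 + s ^ 2) * (1 + s) ^ 5 ≤ 16 * (s ^ 8 - 1) := by
      have h1 : 1 + s ≤ 3 / 2 * s := by linarith
      have h2 : 1 + s ^ 2 ≤ 5 / 4 * s ^ 2 := by nlinarith
      have h3 : (1 + s) ^ 5 ≤ (3 / 2 * s) ^ 5 := pow_le_pow_left₀ (by linarith) h1 5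
      have h4 : s * (1 + s ^ 2) * (1 + s) ^ 5 ≤ s * (5 / 4 * s ^ 2) * (3 / 2 * s) ^ 5 := by
        have hs0 : 0 < s := by linarith
        have e1 : s * (1 + s ^ 2) ≤ s * (5 / 4 * s ^ 2) :=
          mul_le_mul_of_nonneg_left h2 hs0.le
        exact mul_le_mul e1 h3 (by positivity) (by positivity)
      have h5 : s * (5 / 4 * s ^ 2) * (3 / 2 * s) ^ 5 = 1215 / 128 * s ^ 8 := by ring
      nlinarith
    calc s * (1 + s ^ 2) * (1 + s) ^ 5 ≤ 16 * (s ^ 8 - 1) := hstep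
      _ ≤ 16 * ‖ζ ^ 8 - (a:ℂ) ^ 8‖ := by linarith
lemma main_aux (a α' t : ℝ) (ha0 : 0 < a) (ha1 : a < 1) (hα : 0 < α')
    (E : ℂ → ℝ)
    (hE : ∀ ζ : ℂ, E ζ = t * (1 - ‖ζ‖ ^ 2)
        + Real.sqrt (t ^ 2 * (1 - ‖ζ‖ ^ 2) ^ 2
            + 8 * α' * ‖ζ ^ 8 - (a : ℂ) ^ 8‖ / (1 + ‖ζ‖ ^ 2) ^ 2))
    (c : ℂ → ℝ) (hc_cont : Continuous c)
    (hc_bound : ∀ ζ : ℂ, |c ζ| ≤ ‖ζ‖)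
    (hc_odd : ∀ ζ : ℂ, c (-ζ) = - c ζ)
    (h : ℂ → ℝ)
    (hh : ∀ ζ : ℂ, ζ ^ 8 ≠ (a : ℂ) ^ 8 →
        h ζ = c ζ * E ζ / ‖ζ ^ 8 - (a : ℂ) ^ 8‖) :
    Integrable h volume ∧ (∫ ζ : ℂ, h ζ) = 0 := by
  set C : ℝ := 2 * |t| + Real.sqrt (8 * α') with hC
  have hC0 : 0 ≤ C := by positivity
  have hDcont : Continuous fun ζ : ℂ => ‖ζ ^ 8 - (a:ℂ) ^ 8‖ :=
    continuous_norm.comp ((continuous_pow 8).sub continuous_const)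
  have hEcont : Continuous E := by
    have : E = fun ζ : ℂ => t * (1 - ‖ζ‖ ^ 2)
        + Real.sqrt (t ^ 2 * (1 - ‖ζ‖ ^ 2) ^ 2
            + 8 * α' * ‖ζ ^ 8 - (a : ℂ) ^ 8‖ / (1 + ‖ζ‖ ^ 2) ^ 2) :=
      funext hE
    rw [this]
    have habs2 : Continuous fun ζ : ℂ => 1 - ‖ζ‖ ^ 2 :=
      continuous_const.sub (continuous_norm.pow 2)
    refine (continuous_const.mul habs2).add (Real.continuous_sqrt.comp ?_)
    refine ((continuous_const.mul (habs2.pow 2))).add ?_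
    refine Continuous.div (continuous_const.mul hDcont)
      (((continuous_const.add (continuous_norm.pow 2))).pow 2) ?_
    intro ζ
    positivity
  have hEbound : ∀ ζ : ℂ, |E ζ| ≤ C * (1 + ‖ζ‖ ^ 2) := by
    intro ζ
    set r2 : ℝ := ‖ζ‖ ^ 2 with hr2
    have hr20 : 0 ≤ r2 := sq_nonneg _
    set D : ℝ := ‖ζ ^ 8 - (a:ℂ) ^ 8‖ with hDd
    have hD0 : 0 ≤ D := norm_nonneg _
    have hDle : D ≤ (1 + r2) ^ 4 := by
      have h1 : D ≤ ‖ζ ^ 8‖ + ‖(a:ℂ) ^ 8‖ := by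
        have := norm_sub_le (ζ ^ 8) ((a:ℂ) ^ 8)
        exact this
      have h2 : ‖ζ ^ 8‖ = r2 ^ 4 := by
        rw [norm_pow, hr2]
        ring
      have h3 : ‖(a:ℂ) ^ 8‖ ≤ 1 := by
        rw [norm_pow, Complex.norm_real, Real.norm_eq_abs, abs_of_pos ha0]
        exact pow_le_one₀ ha0.le ha1.le
      nlinarith [sq_nonneg r2, sq_nonneg (r2 ^ 2)]
    have hsqrt_add : ∀ x y : ℝ, 0 ≤ x → 0 ≤ y →
        Real.sqrt (x + y) ≤ Real.sqrt x + Real.sqrt y := by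
      intro x y hx hy
      have h := Real.sqrt_le_sqrt (show x + y ≤ (Real.sqrt x + Real.sqrt y) ^ 2 by
        nlinarith [Real.sq_sqrt hx, Real.sq_sqrt hy, Real.sqrt_nonneg x, Real.sqrt_nonneg y,
          mul_nonneg (Real.sqrt_nonneg x) (Real.sqrt_nonneg y)])
      rwa [Real.sqrt_sq (by positivity)] at h
    have h1 : |t * (1 - r2)| ≤ |t| * (1 + r2) := by
      rw [abs_mul]
      have : |1 - r2| ≤ 1 + r2 := by
        rw [abs_le]
        constructor <;> linarith
      exact mul_le_mul_of_nonneg_left this (abs_nonneg t)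
    have h2 : Real.sqrt (t ^ 2 * (1 - r2) ^ 2) = |t * (1 - r2)| := by
      rw [show t ^ 2 * (1 - r2) ^ 2 = (t * (1 - r2)) ^ 2 by ring, Real.sqrt_sq_eq_abs]
    have h3 : 8 * α' * D / (1 + r2) ^ 2 ≤ 8 * α' * (1 + r2) ^ 2 := by
      rw [div_le_iff₀ (by positivity)]
      nlinarith [mul_nonneg (mul_nonneg (by norm_num : (0:ℝ) ≤ 8) hα.le) hD0]
    have h4 : Real.sqrt (8 * α' * D / (1 + r2) ^ 2) ≤ Real.sqrt (8 * α') * (1 + r2) := by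
      have := Real.sqrt_le_sqrt h3
      rwa [show 8 * α' * (1 + r2) ^ 2 = (8 * α') * (1 + r2) ^ 2 by ring,
        Real.sqrt_mul (by positivity) _, Real.sqrt_sq (by positivity)] at this
    have h5 : Real.sqrt (t ^ 2 * (1 - r2) ^ 2 + 8 * α' * D / (1 + r2) ^ 2)
        ≤ |t| * (1 + r2) + Real.sqrt (8 * α') * (1 + r2) := by
      have := hsqrt_add (t ^ 2 * (1 - r2) ^ 2) (8 * α' * D / (1 + r2) ^ 2)
        (by positivity) (by positivity)
      calc Real.sqrt (t ^ 2 * (1 - r2) ^ 2 + 8 * α' * D / (1 + r2) ^ 2)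
          ≤ Real.sqrt (t ^ 2 * (1 - r2) ^ 2) + Real.sqrt (8 * α' * D / (1 + r2) ^ 2) := this
        _ ≤ |t| * (1 + r2) + Real.sqrt (8 * α') * (1 + r2) := by
            rw [h2]
            exact add_le_add h1 h4
    rw [hE]
    calc |t * (1 - r2) + Real.sqrt (t ^ 2 * (1 - r2) ^ 2 + 8 * α' * D / (1 + r2) ^ 2)|
        ≤ |t * (1 - r2)| + |Real.sqrt (t ^ 2 * (1 - r2) ^ 2 + 8 * α' * D / (1 + r2) ^ 2)| :=
          abs_add_le _ _
      _ ≤ |t| * (1 + r2) + (|t| * (1 + r2) + Real.sqrt (8 * α') * (1 + r2)) := by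
          refine add_le_add h1 ?_
          rw [abs_of_nonneg (Real.sqrt_nonneg _)]
          exact h5
      _ = C * (1 + r2) := by rw [hC]; ring
  set F : ℂ → ℝ := fun ζ => c ζ * E ζ / ‖ζ ^ 8 - (a:ℂ) ^ 8‖ with hF
  set Z : Set ℂ := {z : ℂ | z ^ 8 = (a:ℂ) ^ 8} with hZdef
  have hZfin : Z.Finite := by
    have hp := Polynomial.finite_setOf_isRoot
      (p := Polynomial.X ^ 8 - Polynomial.C ((a:ℂ) ^ 8))
      (Polynomial.X_pow_sub_C_ne_zero (by norm_num) _)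
    refine Set.Finite.subset hp ?_
    intro z hz
    simp only [Set.mem_setOf_eq, Polynomial.IsRoot, Polynomial.eval_sub, Polynomial.eval_pow,
      Polynomial.eval_X, Polynomial.eval_C, sub_eq_zero]
    exact hz
  have hZnull : volume Z = 0 := hZfin.measure_zero volume
  have hae : h =ᵐ[volume] F := by
    rw [Filter.eventuallyEq_iff_exists_mem]
    refine ⟨Zᶜ, ?_, ?_⟩
    · rw [MeasureTheory.mem_ae_iff, compl_compl]
      exact hZnull
    · intro ζ hζ
      exact hh ζ hζ
  have hFmeas : AEStronglyMeasurable F volume :=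
    ((hc_cont.mul hEcont).measurable.div hDcont.measurable).aestronglyMeasurable
  have hFbound : ∀ ζ : ℂ, ‖F ζ‖ ≤
      C * (‖ζ‖ * (1 + ‖ζ‖ ^ 2) / ‖ζ ^ 8 - (a:ℂ) ^ 8‖) := by
    intro ζ
    rw [hF, Real.norm_eq_abs]
    simp only []
    rw [abs_div, abs_mul, abs_of_nonneg (norm_nonneg (ζ ^ 8 - (a:ℂ) ^ 8))]
    have hnum : |c ζ| * |E ζ| ≤ C * (‖ζ‖ * (1 + ‖ζ‖ ^ 2)) := by
      calc |c ζ| * |E ζ| ≤ ‖ζ‖ * (C * (1 + ‖ζ‖ ^ 2)) :=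
            mul_le_mul (hc_bound ζ) (hEbound ζ) (abs_nonneg _) (norm_nonneg ζ)
        _ = C * (‖ζ‖ * (1 + ‖ζ‖ ^ 2)) := by ring
    rcases eq_or_lt_of_le (norm_nonneg (ζ ^ 8 - (a:ℂ) ^ 8)) with hD0 | hD0
    · rw [← hD0, div_zero, div_zero, mul_zero]
    · rw [show C * (‖ζ‖ * (1 + ‖ζ‖ ^ 2) / ‖ζ ^ 8 - (a:ℂ) ^ 8‖)
          = C * (‖ζ‖ * (1 + ‖ζ‖ ^ 2)) / ‖ζ ^ 8 - (a:ℂ) ^ 8‖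
          from by ring]
      exact (div_le_div_iff_of_pos_right hD0).2 hnum
  have hFint : Integrable F volume := by
    refine Integrable.mono' ((aux_L4 a ha0 ha1).const_mul C) hFmeas (ae_of_all _ ?_)
    intro ζ
    exact hFbound ζ
  have hint : Integrable h volume := hFint.congr hae.symm
  refine ⟨hint, ?_⟩
  have hodd : ∀ ζ : ℂ, F (-ζ) = - F ζ := by
    intro ζ
    have habsneg : ‖-ζ‖ = ‖ζ‖ := by
      rw [show (-ζ : ℂ) = (-1) * ζ by ring, norm_mul]
      simp
    have hpow : (-ζ) ^ 8 = ζ ^ 8 := Even.neg_pow (by decide) ζ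
    have hE' : E (-ζ) = E ζ := by
      rw [hE, hE, habsneg, hpow]
    rw [hF]
    simp only []
    rw [hE', hpow, hc_odd ζ, neg_mul, neg_div]
  have h1 : ∫ ζ : ℂ, h ζ = ∫ ζ : ℂ, F ζ := integral_congr_ae hae
  have h2 : ∫ ζ : ℂ, F (-ζ) = ∫ ζ : ℂ, F ζ := integral_neg_eq_self F volume
  have h3 : ∫ ζ : ℂ, F (-ζ) = - ∫ ζ : ℂ, F ζ := by
    simp_rw [hodd]
    exact integral_neg F
  rw [h1]
  linarith [h2, h3]


/-- In the genus 3 example (`w² = ζ⁸ − a⁸`, `0 < a < 1`, `α′ > 0`, `t ∈ ℝ`), with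
`E(ζ) = t(1−|ζ|²) + √(t²(1−|ζ|²)² + 8α′|ζ⁸ − a⁸|/(1+|ζ|²)²)`, the functions
`ζ ↦ Re(ζ)·E(ζ)/|ζ⁸ − a⁸|` and `ζ ↦ Im(ζ)·E(ζ)/|ζ⁸ − a⁸|` (defined away from the eight
zeros of `ζ⁸ − a⁸` and extended arbitrarily there) are Lebesgue integrable on `ℂ` and
both integrals vanish. -/
theorem genus_three_beta_gamma_integrals_vanish
    (a α' t : ℝ) (ha0 : 0 < a) (ha1 : a < 1) (hα : 0 < α')
    (E : ℂ → ℝ)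
    (hE : ∀ ζ : ℂ, E ζ = t * (1 - ‖ζ‖ ^ 2)
        + Real.sqrt (t ^ 2 * (1 - ‖ζ‖ ^ 2) ^ 2
            + 8 * α' * ‖ζ ^ 8 - (a : ℂ) ^ 8‖ / (1 + ‖ζ‖ ^ 2) ^ 2))
    (h₁ h₂ : ℂ → ℝ)
    (hh₁ : ∀ ζ : ℂ, ζ ^ 8 ≠ (a : ℂ) ^ 8 →
        h₁ ζ = ζ.re * E ζ / ‖ζ ^ 8 - (a : ℂ) ^ 8‖)
    (hh₂ : ∀ ζ : ℂ, ζ ^ 8 ≠ (a : ℂ) ^ 8 →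
        h₂ ζ = ζ.im * E ζ / ‖ζ ^ 8 - (a : ℂ) ^ 8‖) :
    Integrable h₁ volume ∧ Integrable h₂ volume ∧
      (∫ ζ : ℂ, h₁ ζ) = 0 ∧ (∫ ζ : ℂ, h₂ ζ) = 0 := by
  have H1 := main_aux a α' t ha0 ha1 hα E hE (fun ζ => ζ.re) Complex.continuous_re
    (fun ζ => Complex.abs_re_le_norm ζ) (fun ζ => by simp) h₁ hh₁
  have H2 := main_aux a α' t ha0 ha1 hα E hE (fun ζ => ζ.im) Complex.continuous_im
    (fun ζ => Complex.abs_im_le_norm ζ) (fun ζ => by simp) h₂ hh₂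
  exact ⟨H1.1, H2.1, H1.2, H2.2⟩
end
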